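/- (G-delivery Order Theorem) In any execution of Algorithm 1, for all processes p_l and p_h that are connected by an edge in the proximity graph G, and all messages m_l toco-broadcast by p_l and m_h toco-broadcast by p_h: if some process toco-delivers m_l before m_h, then no process toco-delivers m_h before m_l. -/

import Mathlib

/-!
Operational model of Algorithm 1 (the `G`-fisheye (SC,CC)-broadcast algorithm).

`n` sequential asynchronous processes `p_0, …, p_{n-1}` (type `Fin n`) exchange
application messages of type `M` through reliable FIFO channels (one queue per
ordered pair of processes).  A proximity graph is a `SimpleGraph (Fin n)`.
-/

namespace Fisheye

/-- A tuple `⟨m, s_caus, s_tot, sender⟩`, as carried by `TOCOBC` protocol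
messages and as stored in the `pending` sets of Algorithm 1. -/
structure Tuple (n : ℕ) (M : Type) where
  msg : M
  scaus : Fin n → ℕ
  stot : ℕ
  sender : Fin n

/-- Protocol messages of Algorithm 1. -/
inductive PMsg (n : ℕ) (M : Type) where
  | tocobc (tp : Tuple n M)
  | catchup (d : ℕ) (sender : Fin n)

/-- Local state of a process: the vector clock `causal_i[1..n]`, the vector of
logical clock values `total_i[1..n]`, and the set `pending_i`. -/
structure ProcState (n : ℕ) (M : Type) where
  causal : Fin n → ℕ
  total : Fin n → ℕ
  pending : Set (Tuple n M)

/-- Global configuration: local states plus channel contents.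
`chan j i` is the FIFO queue of protocol messages in transit from `p_j`
to `p_i` (head = oldest message). -/
structure Config (n : ℕ) (M : Type) where
  proc : Fin n → ProcState n M
  chan : Fin n → Fin n → List (PMsg n M)

/-- Initially all clocks are `0`, all pending sets and channels are empty. -/
def initConfig (n : ℕ) (M : Type) : Config n M where
  proc := fun _ => { causal := fun _ => 0, total := fun _ => 0, pending := ∅ }
  chan := fun _ _ => []

/-- Lexicographic strict order on timestamps `⟨s_tot, sender⟩`. -/
def tsLt {n : ℕ} (x y : ℕ × Fin n) : Prop :=
  x.1 < y.1 ∨ (x.1 = y.1 ∧ x.2 < y.2)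

/-- Lexicographic (reflexive) order on timestamps. -/
def tsLe {n : ℕ} (x y : ℕ × Fin n) : Prop := tsLt x y ∨ x = y

/-- The set `C` at process `p_i`: pending tuples whose causal timestamp is
pointwise `≤ causal_i[·]`. -/
def inC {n : ℕ} {M : Type} (c : Config n M) (i : Fin n) (tp : Tuple n M) : Prop :=
  tp ∈ (c.proc i).pending ∧ ∀ k, tp.scaus k ≤ (c.proc i).causal k

/-- The set `T1` at `p_i`: tuples of `C` whose sender `p_j` satisfies
`⟨total_i[k], k⟩ > ⟨s_tot, j⟩` for every neighbor `p_k` of `p_j` in `G`. -/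
def inT1 {n : ℕ} {M : Type} (G : SimpleGraph (Fin n)) (c : Config n M) (i : Fin n)
    (tp : Tuple n M) : Prop :=
  inC c i tp ∧ ∀ k, G.Adj tp.sender k → tsLt (tp.stot, tp.sender) ((c.proc i).total k, k)

/-- The set `T2` at `p_i`: tuples of `T1` such that every pending tuple whose
sender is a neighbor of `p_j` has a (lexicographically) larger timestamp. -/
def inT2 {n : ℕ} {M : Type} (G : SimpleGraph (Fin n)) (c : Config n M) (i : Fin n)
    (tp : Tuple n M) : Prop :=
  inT1 G c i tp ∧ ∀ tp' ∈ (c.proc i).pending, G.Adj tp.sender tp'.sender →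
    tsLt (tp.stot, tp.sender) (tp'.stot, tp'.sender)

/-- Transition labels: `p_i` toco-broadcasts `m`; `p_i` receives the head
`TOCOBC` (resp. `CATCH_UP`) message of the channel from `p_j`; `p_i`
toco-delivers the message of the pending tuple `tp`. -/
inductive Label (n : ℕ) (M : Type) where
  | broadcast (i : Fin n) (m : M)
  | recvToco (i j : Fin n)
  | recvCatchup (i j : Fin n)
  | deliver (i : Fin n) (tp : Tuple n M)

/-- The transition relation of Algorithm 1. -/
inductive Step {n : ℕ} {M : Type} (G : SimpleGraph (Fin n)) :
    Config n M → Label n M → Config n M → Prop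
  /-- `TOCO_broadcast(m)` at `p_i`: increment `total_i[i]`, send
  `TOCOBC(m, ⟨causal_i[·], total_i[i], i⟩)` to every other process, add it to
  `pending_i`, and increment `causal_i[i]`. -/
  | broadcast (c : Config n M) (i : Fin n) (m : M) :
      Step G c (.broadcast i m)
        { proc := Function.update c.proc i
            { causal := Function.update (c.proc i).causal i ((c.proc i).causal i + 1)
              total := Function.update (c.proc i).total i ((c.proc i).total i + 1)
              pending := insert ⟨m, (c.proc i).causal, (c.proc i).total i + 1, i⟩
                           (c.proc i).pending }
          chan := fun a b =>
            if a = i ∧ b ≠ i then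
              c.chan a b ++ [PMsg.tocobc ⟨m, (c.proc i).causal, (c.proc i).total i + 1, i⟩]
            else c.chan a b }
  /-- Reception by `p_i` of the head `TOCOBC(m, ⟨s_caus, s_tot, sender⟩)` of the
  channel from `p_j`: add the tuple to `pending_i`, set `total_i[sender] := s_tot`,
  and if `total_i[i] ≤ s_tot`, set `total_i[i] := s_tot + 1` and send
  `CATCH_UP(total_i[i], i)` to every other process. -/
  | recvToco (c : Config n M) (i j : Fin n) (tp : Tuple n M) (rest : List (PMsg n M))
      (hhead : c.chan j i = PMsg.tocobc tp :: rest) :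
      Step G c (.recvToco i j)
        { proc := Function.update c.proc i
            { causal := (c.proc i).causal
              total :=
                if (c.proc i).total i ≤ tp.stot then
                  Function.update (Function.update (c.proc i).total tp.sender tp.stot) i
                    (tp.stot + 1)
                else Function.update (c.proc i).total tp.sender tp.stot
              pending := insert tp (c.proc i).pending }
          chan := fun a b =>
            if a = j ∧ b = i then rest
            else if (c.proc i).total i ≤ tp.stot ∧ a = i ∧ b ≠ i then
              c.chan a b ++ [PMsg.catchup (tp.stot + 1) i]
            else c.chan a b }
  /-- Reception by `p_i` of the head `CATCH_UP(d, s)` of the channel from `p_j`: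
  set `total_i[s] := d`. -/
  | recvCatchup (c : Config n M) (i j : Fin n) (d : ℕ) (s : Fin n) (rest : List (PMsg n M))
      (hhead : c.chan j i = PMsg.catchup d s :: rest) :
      Step G c (.recvCatchup i j)
        { proc := Function.update c.proc i
            { causal := (c.proc i).causal
              total := Function.update (c.proc i).total s d
              pending := (c.proc i).pending }
          chan := fun a b => if a = j ∧ b = i then rest else c.chan a b }
  /-- The background task at `p_i`: toco-deliver the message of a tuple of `T2`
  with lexicographically minimal timestamp `⟨s_tot, sender⟩`, remove it from
  `pending_i`, and (if its sender is not `p_i`) increment `causal_i[sender]`. -/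
  | deliver (c : Config n M) (i : Fin n) (tp : Tuple n M)
      (hT2 : inT2 G c i tp)
      (hmin : ∀ tp', inT2 G c i tp' → tsLe (tp.stot, tp.sender) (tp'.stot, tp'.sender)) :
      Step G c (.deliver i tp)
        { proc := Function.update c.proc i
            { causal :=
                if tp.sender = i then (c.proc i).causal
                else Function.update (c.proc i).causal tp.sender
                       ((c.proc i).causal tp.sender + 1)
              total := (c.proc i).total
              pending := (c.proc i).pending \ {tp} }
          chan := c.chan }

/-- Either a stuttering step (no transition) or a step of Algorithm 1. -/
def OptStep {n : ℕ} {M : Type} (G : SimpleGraph (Fin n)) (c : Config n M) :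
    Option (Label n M) → Config n M → Prop
  | none, c' => c' = c
  | some l, c' => Step G c l c'

/-- An execution of Algorithm 1: an infinite sequence of configurations starting
in the initial configuration, each obtained from the previous one by (at most)
one transition.  Toco-broadcast (application) messages are assumed unique: no
message is toco-broadcast twice. -/
structure Execution (n : ℕ) (M : Type) (G : SimpleGraph (Fin n)) where
  cfg : ℕ → Config n M
  lbl : ℕ → Option (Label n M)
  init : cfg 0 = initConfig n M
  steps : ∀ t, OptStep G (cfg t) (lbl t) (cfg (t + 1))
  uniqueBcast : ∀ (m : M) (i i' : Fin n) (t t' : ℕ),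
    lbl t = some (.broadcast i m) → lbl t' = some (.broadcast i' m) → t = t'

/-- `p_i` toco-broadcasts `m` at time `t`. -/
def Execution.broadcastsAt {n : ℕ} {M : Type} {G : SimpleGraph (Fin n)}
    (e : Execution n M G) (i : Fin n) (m : M) (t : ℕ) : Prop :=
  e.lbl t = some (.broadcast i m)

/-- `p_i` toco-delivers `m` at time `t`. -/
def Execution.deliversAt {n : ℕ} {M : Type} {G : SimpleGraph (Fin n)}
    (e : Execution n M G) (i : Fin n) (m : M) (t : ℕ) : Prop :=
  ∃ tp : Tuple n M, tp.msg = m ∧ e.lbl t = some (.deliver i tp)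

/-- The message causal order `⇝_M` of the execution: generated by (i) `m1`
toco-broadcast before `m2` by the same process, (ii) `m1` toco-delivered by a
process before that process toco-broadcasts `m2`, and transitivity. -/
inductive Execution.MsgCausal {n : ℕ} {M : Type} {G : SimpleGraph (Fin n)}
    (e : Execution n M G) : M → M → Prop
  | sameProc {i : Fin n} {m1 m2 : M} {t1 t2 : ℕ} :
      t1 < t2 → e.broadcastsAt i m1 t1 → e.broadcastsAt i m2 t2 → e.MsgCausal m1 m2
  | delivered {i : Fin n} {m1 m2 : M} {t1 t2 : ℕ} :
      t1 < t2 → e.deliversAt i m1 t1 → e.broadcastsAt i m2 t2 → e.MsgCausal m1 m2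
  | trans {m1 m2 m3 : M} : e.MsgCausal m1 m2 → e.MsgCausal m2 m3 → e.MsgCausal m1 m3

/-- The delivery condition of the background task of `p_i` is enabled. -/
def Deliverable {n : ℕ} {M : Type} (G : SimpleGraph (Fin n)) (e : Execution n M G)
    (i : Fin n) (t : ℕ) : Prop :=
  ∃ tp : Tuple n M, inT2 G (e.cfg t) i tp

/-- Fairness assumptions of the model: channels are reliable (a protocol message
in transit is eventually received) and the background task of each process is
eventually executed whenever it stays enabled. -/
structure Fair {n : ℕ} {M : Type} {G : SimpleGraph (Fin n)} (e : Execution n M G) : Prop where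
  recvFair : ∀ t (i j : Fin n), (e.cfg t).chan j i ≠ [] →
    ∃ t', t ≤ t' ∧ (e.lbl t' = some (.recvToco i j) ∨ e.lbl t' = some (.recvCatchup i j))
  deliverFair : ∀ t (i : Fin n), (∀ t', t ≤ t' → Deliverable G e i t') →
    ∃ t', t ≤ t' ∧ ∃ tp : Tuple n M, e.lbl t' = some (.deliver i tp)

end Fisheye

namespace Fisheye

variable {n : ℕ} {M : Type} {G : SimpleGraph (Fin n)}

/-- Value carried by a protocol message. -/
def pval : PMsg n M → ℕ
  | .tocobc tp => tp.stot
  | .catchup d _ => d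

/-- Originator of a protocol message. -/
def psender : PMsg n M → Fin n
  | .tocobc tp => tp.sender
  | .catchup _ s => s

/-- Configuration invariant of Algorithm 1. -/
structure Inv (c : Config n M) : Prop where
  diag : ∀ a, c.chan a a = []
  src : ∀ a b, ∀ p ∈ c.chan a b, psender p = a
  low : ∀ l j, ∀ p ∈ c.chan l j, (c.proc j).total l ≤ pval p
  high : ∀ l j, ∀ p ∈ c.chan l j, pval p ≤ (c.proc l).total l
  selfle : ∀ l j, (c.proc j).total l ≤ (c.proc l).total l
  mono : ∀ l j, (c.chan l j).Pairwise (fun p q => pval p ≤ pval q)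

theorem inv_init : Inv (initConfig n M) := by
  constructor <;> simp [initConfig]


theorem upd_total (c : Config n M) (i : Fin n) (S : ProcState n M) (k l : Fin n) :
    (Function.update c.proc i S k).total l = if k = i then S.total l else (c.proc k).total l := by
  rw [Function.update_apply]; split_ifs <;> rfl

theorem upd_pending (c : Config n M) (i : Fin n) (S : ProcState n M) (k : Fin n) :
    (Function.update c.proc i S k).pending = if k = i then S.pending else (c.proc k).pending := by
  rw [Function.update_apply]; split_ifs <;> rfl

theorem inv_step {c c' : Config n M} {lb : Label n M}
    (hs : Step G c lb c') (hc : Inv c) : Inv c' := by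
  cases hs with
  | broadcast i m =>
    set T := (c.proc i).total i with hT
    constructor
    · intro a; dsimp only; rw [if_neg (by tauto)]; exact hc.diag a
    · intro a b p hp; dsimp only at hp
      split_ifs at hp with h
      · rcases List.mem_append.1 hp with h' | h'
        · exact hc.src a b p h'
        · simp at h'; subst h'; simp [psender, h.1]
      · exact hc.src a b p hp
    · intro l j p hp; dsimp only at hp ⊢
      rw [Function.update_apply]
      split_ifs with hj
      · subst hj
        -- channel l → j ; j = i, so condition (l = i ∧ j ≠ i) is false
        rw [if_neg (by tauto)] at hp
        try dsimp only
        rw [Function.update_apply]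
        split_ifs with hl
        · subst hl; rw [hc.diag l] at hp; simp at hp
        · exact hc.low l j p hp
      · split_ifs at hp with h
        · rcases List.mem_append.1 hp with h' | h'
          · exact hc.low l j p h'
          · simp at h'; subst h'
            obtain ⟨hl, -⟩ := h; subst hl
            simp only [pval]
            exact le_trans (hc.selfle l j) (by omega)
        · exact hc.low l j p hp
    · intro l j p hp; dsimp only at hp ⊢
      rw [Function.update_apply]
      split_ifs with hl
      · subst hl; dsimp only
        split_ifs at hp with h
        · rcases List.mem_append.1 hp with h' | h'
          · simp only [Function.update_self]
            exact le_trans (hc.high l j p h') (Nat.le_succ _)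
          · simp at h'; subst h'
            simp [pval, Function.update_self]
        · simp only [Function.update_self]
          exact le_trans (hc.high l j p hp) (Nat.le_succ _)
      · split_ifs at hp with h
        · exact absurd h.1 hl
        · exact hc.high l j p hp
    · intro l j; dsimp only
      rw [Function.update_apply, Function.update_apply]
      split_ifs with hj hl hl
      · subst hj; subst hl; dsimp only; rw [Function.update_self]
      · subst hj; dsimp only; rw [Function.update_of_ne hl]; exact hc.selfle l j
      · subst hl; dsimp only; rw [Function.update_self]
        exact le_trans (hc.selfle l j) (by omega)
      · exact hc.selfle l j
    · intro l j; dsimp only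
      split_ifs with h
      · refine List.pairwise_append.2 ⟨hc.mono l j, by simp, ?_⟩
        intro p hp q hq
        simp at hq; subst hq
        simp only [pval]
        have := hc.high l j p hp
        rw [h.1] at this
        exact le_trans this (Nat.le_succ _)
      · exact hc.mono l j
  | recvToco i j tp rest hhead =>
    have hji : j ≠ i := by
      intro h; rw [h, hc.diag i] at hhead; cases hhead
    have hij : i ≠ j := fun h => hji h.symm
    have hmemhd : PMsg.tocobc tp ∈ c.chan j i := by
      rw [hhead]; exact List.mem_cons_self
    have hsend : tp.sender = j := hc.src j i _ hmemhd
    have hstot_le : tp.stot ≤ (c.proc j).total j := hc.high j i _ hmemhd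
    have hrest_lo : ∀ q ∈ rest, tp.stot ≤ pval q := by
      have h := hc.mono j i; rw [hhead] at h
      exact fun q hq => (List.pairwise_cons.1 h).1 q hq
    have hrest_mono : rest.Pairwise (fun p q => pval p ≤ pval q) := by
      have h := hc.mono j i; rw [hhead] at h
      exact (List.pairwise_cons.1 h).2
    have hrest_sub : ∀ q ∈ rest, q ∈ c.chan j i := by
      rw [hhead]; exact fun q hq => List.mem_cons_of_mem _ hq
    have hStot_j :
        (if (c.proc i).total i ≤ tp.stot then
            Function.update (Function.update (c.proc i).total tp.sender tp.stot) i (tp.stot + 1)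
          else Function.update (c.proc i).total tp.sender tp.stot) j = tp.stot := by
      split_ifs with hca
      · rw [Function.update_of_ne hji, hsend, Function.update_self]
      · rw [hsend, Function.update_self]
    have hStot_i : (c.proc i).total i ≤
        (if (c.proc i).total i ≤ tp.stot then
            Function.update (Function.update (c.proc i).total tp.sender tp.stot) i (tp.stot + 1)
          else Function.update (c.proc i).total tp.sender tp.stot) i := by
      split_ifs with hca
      · rw [Function.update_self]; omega
      · rw [Function.update_of_ne (hsend ▸ hij)]
    have hStot_k : ∀ k : Fin n, k ≠ i → k ≠ j →
        (if (c.proc i).total i ≤ tp.stot then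
            Function.update (Function.update (c.proc i).total tp.sender tp.stot) i (tp.stot + 1)
          else Function.update (c.proc i).total tp.sender tp.stot) k = (c.proc i).total k := by
      intro k hki hkj
      split_ifs with hca
      · rw [Function.update_of_ne hki, Function.update_of_ne (hsend ▸ hkj)]
      · rw [Function.update_of_ne (hsend ▸ hkj)]
    constructor
    · intro a; dsimp only
      rw [if_neg (fun h => hji (h.1.symm.trans h.2)),
          if_neg (fun h => h.2.2 h.2.1)]
      exact hc.diag a
    · intro a b p hp; dsimp only at hp
      split_ifs at hp with h1 h2
      · rw [h1.1]; exact hc.src j i p (hrest_sub p hp)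
      · rcases List.mem_append.1 hp with h' | h'
        · exact hc.src a b p h'
        · simp at h'; subst h'; simp [psender, h2.2.1]
      · exact hc.src a b p hp
    · intro l j' p hp; dsimp only at hp ⊢
      simp only [upd_total]
      split_ifs at hp with h1 h2
      · rw [if_pos h1.2, h1.1]
        try dsimp only
        rw [hStot_j]
        exact hrest_lo p hp
      · obtain ⟨hca, hli, hj'⟩ := h2
        rw [hli] at hp ⊢
        rw [if_neg hj']
        rcases List.mem_append.1 hp with h' | h'
        · exact hc.low i j' p h'
        · simp at h'; subst h'
          simp only [pval]
          exact le_trans (hc.selfle i j') (by omega)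
      · by_cases hj' : j' = i
        · rw [hj'] at hp
          rw [if_pos hj']
          by_cases hl : l = i
          · rw [hl, hc.diag i] at hp; cases hp
          · by_cases hlj : l = j
            · exact absurd ⟨hlj, hj'⟩ h1
            · rw [hStot_k l hl hlj]
              exact hc.low l i p hp
        · rw [if_neg hj']
          exact hc.low l j' p hp
    · intro l j' p hp; dsimp only at hp ⊢
      simp only [upd_total]
      split_ifs at hp with h1 h2
      · rw [h1.1, if_neg hji]
        exact hc.high j i p (hrest_sub p hp)
      · obtain ⟨hca, hli, hj'⟩ := h2
        rw [hli] at hp ⊢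
        rw [if_pos rfl]
        try dsimp only
        rw [if_pos hca, Function.update_self]
        rcases List.mem_append.1 hp with h' | h'
        · exact le_trans (hc.high i j' p h') (by omega)
        · simp at h'; subst h'
          simp [pval]
      · by_cases hl : l = i
        · rw [hl] at hp ⊢
          rw [if_pos rfl]
          exact le_trans (hc.high i j' p hp) hStot_i
        · rw [if_neg hl]
          exact hc.high l j' p hp
    · intro l j'
      simp only [upd_total]
      by_cases hj' : j' = i <;> by_cases hl : l = i
      · rw [if_pos hj', if_pos hl]
      · rw [if_pos hj', if_neg hl]
        by_cases hlj : l = j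
        · rw [hlj, hStot_j]; exact hstot_le
        · rw [hStot_k l hl hlj]; exact hc.selfle l i
      · rw [if_neg hj', if_pos hl, hl]
        exact le_trans (hc.selfle i j') hStot_i
      · rw [if_neg hj', if_neg hl]
        exact hc.selfle l j'
    · intro l j'; dsimp only
      split_ifs with h1 h2
      · exact hrest_mono
      · refine List.pairwise_append.2 ⟨hc.mono l j', by simp, ?_⟩
        intro p hp q hq
        simp at hq; subst hq
        simp only [pval]
        obtain ⟨hca, hli, -⟩ := h2
        rw [hli] at hp
        exact le_trans (hc.high i j' p hp) (by omega)
      · exact hc.mono l j'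
  | recvCatchup i j d s rest hhead =>
    have hji : j ≠ i := by
      intro h; rw [h, hc.diag i] at hhead; cases hhead
    have hij : i ≠ j := fun h => hji h.symm
    have hmemhd : PMsg.catchup d s ∈ c.chan j i := by
      rw [hhead]; exact List.mem_cons_self
    have hsend : s = j := hc.src j i _ hmemhd
    have hd_le : d ≤ (c.proc j).total j := hc.high j i _ hmemhd
    have hrest_lo : ∀ q ∈ rest, d ≤ pval q := by
      have h := hc.mono j i; rw [hhead] at h
      exact fun q hq => (List.pairwise_cons.1 h).1 q hq
    have hrest_mono : rest.Pairwise (fun p q => pval p ≤ pval q) := by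
      have h := hc.mono j i; rw [hhead] at h
      exact (List.pairwise_cons.1 h).2
    have hrest_sub : ∀ q ∈ rest, q ∈ c.chan j i := by
      rw [hhead]; exact fun q hq => List.mem_cons_of_mem _ hq
    constructor
    · intro a; dsimp only
      rw [if_neg (fun h => hji (h.1.symm.trans h.2))]
      exact hc.diag a
    · intro a b p hp; dsimp only at hp
      split_ifs at hp with h1
      · rw [h1.1]; exact hc.src j i p (hrest_sub p hp)
      · exact hc.src a b p hp
    · intro l j' p hp; dsimp only at hp ⊢
      simp only [upd_total]
      split_ifs at hp with h1
      · rw [if_pos h1.2, h1.1]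
        try dsimp only
        rw [hsend, Function.update_self]
        exact hrest_lo p hp
      · by_cases hj' : j' = i
        · rw [hj'] at hp
          rw [if_pos hj']
          by_cases hls : l = s
          · exact absurd ⟨hls.trans hsend, hj'⟩ h1
          · rw [Function.update_of_ne hls]
            exact hc.low l i p hp
        · rw [if_neg hj']
          exact hc.low l j' p hp
    · intro l j' p hp; dsimp only at hp ⊢
      simp only [upd_total]
      split_ifs at hp with h1
      · rw [h1.1, if_neg hji]
        exact hc.high j i p (hrest_sub p hp)
      · by_cases hl : l = i
        · rw [hl] at hp ⊢
          rw [if_pos rfl, Function.update_of_ne (hsend ▸ hij)]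
          exact hc.high i j' p hp
        · rw [if_neg hl]
          exact hc.high l j' p hp
    · intro l j'
      simp only [upd_total]
      by_cases hj' : j' = i <;> by_cases hl : l = i
      · rw [if_pos hj', if_pos hl]
      · rw [if_pos hj', if_neg hl]
        by_cases hls : l = s
        · rw [hls, hsend, Function.update_self]; exact hd_le
        · rw [Function.update_of_ne hls]; exact hc.selfle l i
      · rw [if_neg hj', if_pos hl, hl, Function.update_of_ne (hsend ▸ hij)]
        exact hc.selfle i j'
      · rw [if_neg hj', if_neg hl]
        exact hc.selfle l j'
    · intro l j'; dsimp only
      split_ifs with h1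
      · exact hrest_mono
      · exact hc.mono l j'
  | deliver i tp hT2 hmin =>
    have htot : ∀ (ps : Fin n → ProcState n M) (i : Fin n) (cs : Fin n → ℕ)
        (pend : Set (Tuple n M)) (k : Fin n),
        (Function.update ps i { causal := cs, total := (ps i).total, pending := pend } k).total
          = (ps k).total := by
      intro ps i cs pend k
      rw [Function.update_apply]
      split_ifs with h
      · subst h; rfl
      · rfl
    refine ⟨hc.diag, hc.src, ?_, ?_, ?_, hc.mono⟩ <;> dsimp only <;> simp only [htot]
    · exact hc.low
    · exact hc.high
    · exact hc.selfle

theorem step_of_lbl (e : Execution n M G) {t : ℕ} {lab : Label n M}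
    (h : e.lbl t = some lab) : Step G (e.cfg t) lab (e.cfg (t + 1)) := by
  have hs := e.steps t
  rw [h] at hs
  exact hs

theorem cfg_of_none (e : Execution n M G) {t : ℕ} (h : e.lbl t = none) :
    e.cfg (t + 1) = e.cfg t := by
  have hs := e.steps t
  rw [h] at hs
  exact hs

theorem inv_reach (e : Execution n M G) : ∀ t, Inv (e.cfg t) := by
  intro t
  induction t with
  | zero => rw [e.init]; exact inv_init
  | succ t ih =>
    cases hl : e.lbl t with
    | none => rw [cfg_of_none e hl]; exact ih
    | some lab => exact inv_step (step_of_lbl e hl) ih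

theorem step_total_self {c c' : Config n M} {lb : Label n M}
    (hs : Step G c lb c') (hc : Inv c) (k : Fin n) :
    (c.proc k).total k ≤ (c'.proc k).total k := by
  cases hs with
  | broadcast i m =>
    rw [upd_total]
    by_cases hk : k = i
    · rw [if_pos hk, hk]
      dsimp only
      rw [Function.update_self]
      exact Nat.le_succ _
    · rw [if_neg hk]
  | recvToco i j tp rest hhead =>
    have hji : j ≠ i := by
      intro h; rw [h, hc.diag i] at hhead; cases hhead
    have hsend : tp.sender = j :=
      hc.src j i (PMsg.tocobc tp) (by rw [hhead]; exact List.mem_cons_self)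
    rw [upd_total]
    by_cases hk : k = i
    · rw [if_pos hk, hk]
      dsimp only
      split_ifs with hca
      · rw [Function.update_self]; omega
      · rw [Function.update_of_ne (hsend ▸ fun h => hji h.symm)]
    · rw [if_neg hk]
  | recvCatchup i j d sdr rest hhead =>
    have hji : j ≠ i := by
      intro h; rw [h, hc.diag i] at hhead; cases hhead
    have hsend : sdr = j :=
      hc.src j i (PMsg.catchup d sdr) (by rw [hhead]; exact List.mem_cons_self)
    rw [upd_total]
    by_cases hk : k = i
    · rw [if_pos hk, hk]
      dsimp only
      rw [Function.update_of_ne (hsend ▸ fun h => hji h.symm)]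
    · rw [if_neg hk]
  | deliver i tp hT2 hmin =>
    rw [upd_total]
    by_cases hk : k = i
    · rw [if_pos hk, hk]
    · rw [if_neg hk]

theorem total_self_mono (e : Execution n M G) (k : Fin n) {s t : ℕ} (h : s ≤ t) :
    ((e.cfg s).proc k).total k ≤ ((e.cfg t).proc k).total k := by
  induction t with
  | zero => rw [Nat.le_zero.1 h]
  | succ t ih =>
    by_cases hst : s ≤ t
    · refine le_trans (ih hst) ?_
      cases hl : e.lbl t with
      | none => rw [cfg_of_none e hl]
      | some lab => exact step_total_self (step_of_lbl e hl) (inv_reach e t) k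
    · have hst' : s = t + 1 := by omega
      rw [hst']

/-- The tuple created by a `TOCO_broadcast(m)` of `p_i` in configuration `c`. -/
def mkTuple (c : Config n M) (i : Fin n) (m : M) : Tuple n M :=
  ⟨m, (c.proc i).causal, (c.proc i).total i + 1, i⟩

/-- Every tuple present in a pending set or a channel originates in a broadcast. -/
theorem origin (e : Execution n M G) :
    ∀ t (tp : Tuple n M),
      ((∃ i, tp ∈ ((e.cfg t).proc i).pending) ∨ ∃ a b, PMsg.tocobc tp ∈ (e.cfg t).chan a b) →
      ∃ s, s < t ∧ e.lbl s = some (.broadcast tp.sender tp.msg) ∧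
        tp = mkTuple (e.cfg s) tp.sender tp.msg := by
  intro t
  induction t with
  | zero =>
    intro tp h; rw [e.init] at h
    simp [initConfig] at h
  | succ t ih =>
    intro tp h
    have bump : (∃ s, s < t ∧ e.lbl s = some (.broadcast tp.sender tp.msg) ∧
        tp = mkTuple (e.cfg s) tp.sender tp.msg) →
        ∃ s, s < t + 1 ∧ e.lbl s = some (.broadcast tp.sender tp.msg) ∧
        tp = mkTuple (e.cfg s) tp.sender tp.msg :=
      fun ⟨s, h1, h2, h3⟩ => ⟨s, Nat.lt_succ_of_lt h1, h2, h3⟩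
    cases hl : e.lbl t with
    | none =>
      rw [cfg_of_none e hl] at h
      exact bump (ih tp h)
    | some lab =>
      have hs := step_of_lbl e hl
      generalize hcc : e.cfg (t + 1) = c' at hs h
      cases hs with
      | broadcast i m =>
        rcases h with ⟨i', hi'⟩ | ⟨a, b, hab⟩
        · rw [upd_pending] at hi'
          dsimp only at hi'
          split_ifs at hi' with hii
          · rcases Set.mem_insert_iff.1 hi' with rfl | hold
            · exact ⟨t, Nat.lt_succ_self t, by rw [hl], rfl⟩
            · exact bump (ih tp (Or.inl ⟨i, hold⟩))
          · exact bump (ih tp (Or.inl ⟨i', hi'⟩))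
        · dsimp only at hab
          split_ifs at hab with hcond
          · rcases List.mem_append.1 hab with hold | hnew
            · exact bump (ih tp (Or.inr ⟨a, b, hold⟩))
            · simp at hnew
              rw [hnew]
              exact ⟨t, Nat.lt_succ_self t, by rw [hl], rfl⟩
          · exact bump (ih tp (Or.inr ⟨a, b, hab⟩))
      | recvToco i j tp0 rest hhead =>
        rcases h with ⟨i', hi'⟩ | ⟨a, b, hab⟩
        · rw [upd_pending] at hi'
          dsimp only at hi'
          split_ifs at hi' with hii
          · rcases Set.mem_insert_iff.1 hi' with rfl | hold
            · refine bump (ih tp (Or.inr ⟨j, i, ?_⟩))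
              rw [hhead]; exact List.mem_cons_self
            · exact bump (ih tp (Or.inl ⟨i, hold⟩))
          · exact bump (ih tp (Or.inl ⟨i', hi'⟩))
        · dsimp only at hab
          split_ifs at hab with h1 h2
          · refine bump (ih tp (Or.inr ⟨j, i, ?_⟩))
            rw [hhead]; exact List.mem_cons_of_mem _ hab
          · rcases List.mem_append.1 hab with hold | hnew
            · exact bump (ih tp (Or.inr ⟨a, b, hold⟩))
            · simp at hnew
          · exact bump (ih tp (Or.inr ⟨a, b, hab⟩))
      | recvCatchup i j d sdr rest hhead =>
        rcases h with ⟨i', hi'⟩ | ⟨a, b, hab⟩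
        · rw [upd_pending] at hi'
          try dsimp only at hi'
          split_ifs at hi' with hii
          · exact bump (ih tp (Or.inl ⟨i, hi'⟩))
          · exact bump (ih tp (Or.inl ⟨i', hi'⟩))
        · dsimp only at hab
          split_ifs at hab with h1
          · refine bump (ih tp (Or.inr ⟨j, i, ?_⟩))
            rw [hhead]; exact List.mem_cons_of_mem _ hab
          · exact bump (ih tp (Or.inr ⟨a, b, hab⟩))
      | deliver i tp0 hT2 hmin =>
        rcases h with ⟨i', hi'⟩ | ⟨a, b, hab⟩
        · rw [upd_pending] at hi'
          try dsimp only at hi'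
          split_ifs at hi' with hii
          · exact bump (ih tp (Or.inl ⟨i, hi'.1⟩))
          · exact bump (ih tp (Or.inl ⟨i', hi'⟩))
        · exact bump (ih tp (Or.inr ⟨a, b, hab⟩))

/-- Forward presence: once broadcast, a tuple is delivered, pending, or in transit. -/
theorem presence_fwd (e : Execution n M G) {h0 : Fin n} {m : M} {th : ℕ}
    (hb : e.lbl th = some (.broadcast h0 m)) (j : Fin n) :
    ∀ t, th < t →
      (∃ s, s < t ∧ e.lbl s = some (.deliver j (mkTuple (e.cfg th) h0 m))) ∨
      mkTuple (e.cfg th) h0 m ∈ ((e.cfg t).proc j).pending ∨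
      PMsg.tocobc (mkTuple (e.cfg th) h0 m) ∈ (e.cfg t).chan h0 j := by
  intro t
  induction t with
  | zero => omega
  | succ t ih =>
    intro hlt
    by_cases hth : th = t
    · subst hth
      have hs := step_of_lbl e hb
      generalize hcc : e.cfg (th + 1) = c' at hs ⊢
      cases hs
      by_cases hj : j = h0
      · refine Or.inr (Or.inl ?_)
        rw [upd_pending, if_pos hj]
        exact Set.mem_insert _ _
      · refine Or.inr (Or.inr ?_)
        dsimp only
        rw [if_pos ⟨rfl, hj⟩]
        exact List.mem_append.2 (Or.inr (List.mem_singleton.2 rfl))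
    · have hlt' : th < t := by omega
      rcases ih hlt' with ⟨s, hs1, hs2⟩ | hpend | hchan
      · exact Or.inl ⟨s, Nat.lt_succ_of_lt hs1, hs2⟩
      · -- pending at t
        cases hl : e.lbl t with
        | none => rw [cfg_of_none e hl]; exact Or.inr (Or.inl hpend)
        | some lab =>
          have hs := step_of_lbl e hl
          generalize hcc : e.cfg (t + 1) = c' at hs ⊢
          cases hs with
          | broadcast i m' =>
            refine Or.inr (Or.inl ?_)
            rw [upd_pending]
            split_ifs with hji
            · exact Set.mem_insert_of_mem _ (hji ▸ hpend)
            · exact hpend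
          | recvToco i j' tp0 rest hhead =>
            refine Or.inr (Or.inl ?_)
            rw [upd_pending]
            dsimp only
            split_ifs with hji
            · exact Set.mem_insert_of_mem _ (hji ▸ hpend)
            · exact hpend
          | recvCatchup i j' d sdr rest hhead =>
            refine Or.inr (Or.inl ?_)
            rw [upd_pending]
            dsimp only
            split_ifs with hji
            · exact hji ▸ hpend
            · exact hpend
          | deliver i tp0 hT2 hmin =>
            by_cases hdel : i = j ∧ tp0 = mkTuple (e.cfg th) h0 m
            · exact Or.inl ⟨t, Nat.lt_succ_self t, by rw [hl, hdel.1, hdel.2]⟩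
            · refine Or.inr (Or.inl ?_)
              rw [upd_pending]
              dsimp only
              split_ifs with hji
              · subst hji
                refine Set.mem_diff_of_mem hpend ?_
                intro hmem
                rw [Set.mem_singleton_iff] at hmem
                exact hdel ⟨rfl, hmem.symm⟩
              · exact hpend
      · -- in channel h0 → j at t
        cases hl : e.lbl t with
        | none => rw [cfg_of_none e hl]; exact Or.inr (Or.inr hchan)
        | some lab =>
          have hs := step_of_lbl e hl
          generalize hcc : e.cfg (t + 1) = c' at hs ⊢
          cases hs with
          | broadcast i m' =>
            refine Or.inr (Or.inr ?_)
            dsimp only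
            split_ifs with hcond
            · exact List.mem_append.2 (Or.inl hchan)
            · exact hchan
          | recvToco i j' tp0 rest hhead =>
            by_cases hcons : h0 = j' ∧ j = i
            · obtain ⟨hc1, hc2⟩ := hcons
              rw [← hc1, ← hc2] at hhead
              rw [hhead] at hchan
              rcases List.mem_cons.1 hchan with heq | hrest
              · refine Or.inr (Or.inl ?_)
                rw [upd_pending]
                dsimp only
                rw [if_pos hc2]
                have htp0 : tp0 = mkTuple (e.cfg th) h0 m := by
                  injection heq.symm
                rw [htp0]
                exact Set.mem_insert _ _
              · refine Or.inr (Or.inr ?_)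
                dsimp only
                rw [if_pos ⟨hc1, hc2⟩]
                exact hrest
            · refine Or.inr (Or.inr ?_)
              dsimp only
              rw [if_neg hcons]
              split_ifs with hcond
              · exact List.mem_append.2 (Or.inl hchan)
              · exact hchan
          | recvCatchup i j' d sdr rest hhead =>
            refine Or.inr (Or.inr ?_)
            dsimp only
            split_ifs with hcons
            · obtain ⟨h1, h2⟩ := hcons
              rw [← h1, ← h2] at hhead
              rw [hhead] at hchan
              rcases List.mem_cons.1 hchan with heq | hrest
              · cases heq
              · exact hrest
            · exact hchan
          | deliver i tp0 hT2 hmin =>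
            exact Or.inr (Or.inr hchan)

/-- One backward step of presence: if the canonical tuple is pending or in
transit after step `t` (and `t` is not the broadcast time), it already was
pending or in transit before step `t`. -/
theorem presence_bwd_step (e : Execution n M G) {h0 : Fin n} {m : M} {th : ℕ}
    (hb : e.lbl th = some (.broadcast h0 m)) (j : Fin n) {t : ℕ} (hne : t ≠ th)
    (h : mkTuple (e.cfg th) h0 m ∈ ((e.cfg (t + 1)).proc j).pending ∨
         PMsg.tocobc (mkTuple (e.cfg th) h0 m) ∈ (e.cfg (t + 1)).chan h0 j) :
    mkTuple (e.cfg th) h0 m ∈ ((e.cfg t).proc j).pending ∨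
    PMsg.tocobc (mkTuple (e.cfg th) h0 m) ∈ (e.cfg t).chan h0 j := by
  have hInv := inv_reach e t
  cases hl : e.lbl t with
  | none => rw [cfg_of_none e hl] at h; exact h
  | some lab =>
    have hs := step_of_lbl e hl
    generalize hcc : e.cfg (t + 1) = c' at hs h
    cases hs with
    | broadcast i m' =>
      rcases h with hp | hc
      · rw [upd_pending] at hp
        dsimp only at hp
        split_ifs at hp with hji
        · rcases Set.mem_insert_iff.1 hp with heq | hold
          · exfalso
            have hm : m = m' := congrArg Tuple.msg heq
            have : t = th := e.uniqueBcast m i h0 t th (by rw [hl, hm]) hb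
            exact hne this
          · refine Or.inl ?_; rw [hji]; exact hold
        · exact Or.inl hp
      · dsimp only at hc
        split_ifs at hc with hcond
        · rcases List.mem_append.1 hc with hold | hnew
          · exact Or.inr hold
          · exfalso
            simp only [List.mem_singleton] at hnew
            injection hnew with heq
            have hm : m = m' := congrArg Tuple.msg heq
            have : t = th := e.uniqueBcast m i h0 t th (by rw [hl, hm]) hb
            exact hne this
        · exact Or.inr hc
    | recvToco i j' tp0 rest hhead =>
      rcases h with hp | hc
      · rw [upd_pending] at hp
        dsimp only at hp
        split_ifs at hp with hji
        · rcases Set.mem_insert_iff.1 hp with heq | hold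
          · -- the inserted tuple is ours: it was in channel j' → i
            have hsend : tp0.sender = j' :=
              hInv.src j' i (PMsg.tocobc tp0)
                (by rw [hhead]; exact List.mem_cons_self)
            have hsend2 : tp0.sender = h0 := by rw [← heq]; rfl
            refine Or.inr ?_
            rw [← hsend2.symm.trans hsend, ← hji] at hhead
            rw [hhead, ← heq]
            exact List.mem_cons_self
          · refine Or.inl ?_; rw [hji]; exact hold
        · exact Or.inl hp
      · dsimp only at hc
        split_ifs at hc with h1 h2
        · refine Or.inr ?_
          rw [← h1.1, ← h1.2] at hhead
          rw [hhead]
          exact List.mem_cons_of_mem _ hc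
        · rcases List.mem_append.1 hc with hold | hnew
          · exact Or.inr hold
          · simp at hnew
        · exact Or.inr hc
    | recvCatchup i j' d sdr rest hhead =>
      rcases h with hp | hc
      · rw [upd_pending] at hp
        dsimp only at hp
        split_ifs at hp with hji
        · refine Or.inl ?_; rw [hji]; exact hp
        · exact Or.inl hp
      · dsimp only at hc
        split_ifs at hc with h1
        · refine Or.inr ?_
          rw [← h1.1, ← h1.2] at hhead
          rw [hhead]
          exact List.mem_cons_of_mem _ hc
        · exact Or.inr hc
    | deliver i tp0 hT2 hmin =>
      rcases h with hp | hc
      · rw [upd_pending] at hp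
        dsimp only at hp
        split_ifs at hp with hji
        · refine Or.inl ?_; rw [hji]; exact hp.1
        · exact Or.inl hp
      · exact Or.inr hc

/-- Backward presence: if the canonical tuple is pending (or in transit) at
time `t2`, then at any time after the broadcast and before `t2` it was pending
or in transit. -/
theorem presence_bwd (e : Execution n M G) {h0 : Fin n} {m : M} {th : ℕ}
    (hb : e.lbl th = some (.broadcast h0 m)) (j : Fin n) :
    ∀ t2, (mkTuple (e.cfg th) h0 m ∈ ((e.cfg t2).proc j).pending ∨
           PMsg.tocobc (mkTuple (e.cfg th) h0 m) ∈ (e.cfg t2).chan h0 j) →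
      ∀ t, th < t → t ≤ t2 →
        mkTuple (e.cfg th) h0 m ∈ ((e.cfg t).proc j).pending ∨
        PMsg.tocobc (mkTuple (e.cfg th) h0 m) ∈ (e.cfg t).chan h0 j := by
  intro t2
  induction t2 with
  | zero => intro _ t h1 h2; omega
  | succ t2 ih =>
    intro h t h1 h2
    by_cases he : t = t2 + 1
    · rw [he]; exact h
    · have h2' : t ≤ t2 := by omega
      have hne : t2 ≠ th := by omega
      exact ih (presence_bwd_step e hb j hne h) t h1 h2'

theorem deliver_inversion (e : Execution n M G) {t : ℕ} {i : Fin n} {tp : Tuple n M}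
    (h : e.lbl t = some (.deliver i tp)) :
    inT2 G (e.cfg t) i tp ∧
      ∀ tp', inT2 G (e.cfg t) i tp' → tsLe (tp.stot, tp.sender) (tp'.stot, tp'.sender) := by
  have hs := step_of_lbl e h
  generalize hcc : e.cfg (t + 1) = c' at hs
  cases hs
  next hT2 hmin => exact ⟨hT2, hmin⟩

theorem tsLt_of_le_left {a : ℕ × Fin n} {x x' : ℕ} {s : Fin n}
    (h : tsLt a (x, s)) (hx : x ≤ x') : tsLt a (x', s) := by
  rcases h with h | ⟨h1, h2⟩
  · exact Or.inl (lt_of_lt_of_le h hx)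
  · rcases Nat.lt_or_ge x x' with hlt | hge
    · exact Or.inl (h1 ▸ hlt)
    · exact Or.inr ⟨by omega, h2⟩

theorem tsLt_asymm {x y : ℕ × Fin n} (h1 : tsLt x y) (h2 : tsLt y x) : False := by
  rcases h1 with h1 | ⟨e1, h1⟩ <;> rcases h2 with h2 | ⟨e2, h2⟩
  · omega
  · omega
  · omega
  · exact lt_asymm h1 h2

/-- Key lemma: when `p_i` delivers `tp`, any undelivered tuple `tp'` from a
`G`-neighbor of `tp`'s sender has a larger timestamp. -/
theorem key_lemma (e : Execution n M G) {t : ℕ} {i : Fin n} {tp tp' : Tuple n M}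
    (hd : e.lbl t = some (.deliver i tp))
    (hadj : G.Adj tp.sender tp'.sender)
    (hloc : tp' ∈ ((e.cfg t).proc i).pending ∨
            PMsg.tocobc tp' ∈ (e.cfg t).chan tp'.sender i ∨
            ∃ s, t < s ∧ tp'.stot = ((e.cfg s).proc tp'.sender).total tp'.sender + 1) :
    tsLt (tp.stot, tp.sender) (tp'.stot, tp'.sender) := by
  obtain ⟨hT2, -⟩ := deliver_inversion e hd
  have hInv := inv_reach e t
  rcases hloc with hpend | hchan | ⟨s, hts, hstot⟩
  · exact hT2.2 tp' hpend hadj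
  · exact tsLt_of_le_left (hT2.1.2 tp'.sender hadj) (hInv.low tp'.sender i _ hchan)
  · have h2 : ((e.cfg t).proc i).total tp'.sender
        ≤ ((e.cfg t).proc tp'.sender).total tp'.sender := hInv.selfle _ _
    have h3 := total_self_mono e tp'.sender (le_of_lt hts)
    exact tsLt_of_le_left (hT2.1.2 tp'.sender hadj) (by omega)

/-- A delivered message's tuple is the canonical tuple of its broadcast. -/
theorem deliver_canon (e : Execution n M G) {j h0 : Fin n} {m : M} {t th : ℕ}
    (hb : e.lbl th = some (.broadcast h0 m)) (hd : e.deliversAt j m t) :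
    e.lbl t = some (.deliver j (mkTuple (e.cfg th) h0 m)) := by
  obtain ⟨tp, hmsg, hlbl⟩ := hd
  obtain ⟨hT2, -⟩ := deliver_inversion e hlbl
  obtain ⟨s, hst, hsb, hmk⟩ := origin e t tp (Or.inl ⟨j, hT2.1.1.1⟩)
  rw [hmsg] at hsb hmk
  have hseq : s = th := e.uniqueBcast m tp.sender h0 s th hsb hb
  subst hseq
  have hsender : tp.sender = h0 := by
    have := hsb.symm.trans hb
    simpa using this
  rw [hsender] at hmk
  rw [← hmk, hlbl]

end Fisheye

namespace Fisheye

/-- **G-delivery Order Theorem.**  In any execution of Algorithm 1, for all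
processes `p_l` and `p_h` connected by an edge of the proximity graph `G`, and
all messages `m_l` toco-broadcast by `p_l` and `m_h` toco-broadcast by `p_h`:
if some process toco-delivers `m_l` before `m_h`, then no process toco-delivers
`m_h` before `m_l`, i.e., any process that toco-delivers `m_h` must have
toco-delivered `m_l` at some earlier time. -/
theorem g_delivery_order {n : ℕ} {M : Type} {G : SimpleGraph (Fin n)}
    (e : Execution n M G) :
    ∀ (l h : Fin n), G.Adj l h →
      ∀ (ml mh : M) (tl th : ℕ),
        e.broadcastsAt l ml tl → e.broadcastsAt h mh th →
        (∃ (i : Fin n) (t1 t2 : ℕ), t1 < t2 ∧ e.deliversAt i ml t1 ∧ e.deliversAt i mh t2) →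
        ∀ (j : Fin n) (t : ℕ), e.deliversAt j mh t →
          ∃ t', t' < t ∧ e.deliversAt j ml t' := by
  intro l h hadj ml mh tl th hbl hbh hex j t hdjt
  obtain ⟨i, t1, t2, h12, hd1, hd2⟩ := hex
  have hbl' : e.lbl tl = some (.broadcast l ml) := hbl
  have hbh' : e.lbl th = some (.broadcast h mh) := hbh
  have hlt1 : e.lbl t1 = some (.deliver i (mkTuple (e.cfg tl) l ml)) :=
    deliver_canon e hbl' hd1
  have hlt2 : e.lbl t2 = some (.deliver i (mkTuple (e.cfg th) h mh)) :=
    deliver_canon e hbh' hd2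
  -- Part 1: the timestamp of m_l is smaller than that of m_h
  have h1 : tsLt ((mkTuple (e.cfg tl) l ml).stot, (mkTuple (e.cfg tl) l ml).sender)
      ((mkTuple (e.cfg th) h mh).stot, (mkTuple (e.cfg th) h mh).sender) := by
    apply key_lemma e (tp' := mkTuple (e.cfg th) h mh) hlt1 (by exact hadj)
    rcases Nat.lt_trichotomy t1 th with hlt | heq | hgt
    · exact Or.inr (Or.inr ⟨th, hlt, rfl⟩)
    · exfalso
      rw [heq] at hlt1
      have := hbh'.symm.trans hlt1
      simp at this
    · have hpend2 : mkTuple (e.cfg th) h mh ∈ ((e.cfg t2).proc i).pending :=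
        (deliver_inversion e hlt2).1.1.1.1
      exact (presence_bwd e hbh' i t2 (Or.inl hpend2) t1 hgt (le_of_lt h12)).imp
        id Or.inl
  -- Conclusion by contradiction
  by_contra hno
  push_neg at hno
  have hjt : e.lbl t = some (.deliver j (mkTuple (e.cfg th) h mh)) :=
    deliver_canon e hbh' hdjt
  have h2 : tsLt ((mkTuple (e.cfg th) h mh).stot, (mkTuple (e.cfg th) h mh).sender)
      ((mkTuple (e.cfg tl) l ml).stot, (mkTuple (e.cfg tl) l ml).sender) := by
    apply key_lemma e (tp' := mkTuple (e.cfg tl) l ml) hjt (by exact hadj.symm)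
    rcases Nat.lt_trichotomy t tl with hlt | heq | hgt
    · exact Or.inr (Or.inr ⟨tl, hlt, rfl⟩)
    · exfalso
      rw [heq] at hjt
      have := hbl'.symm.trans hjt
      simp at this
    · rcases presence_fwd e hbl' j t hgt with ⟨s, hs1, hs2⟩ | hp | hc
      · exact absurd ⟨mkTuple (e.cfg tl) l ml, rfl, hs2⟩ (hno s hs1)
      · exact Or.inl hp
      · exact Or.inr (Or.inl hc)
  exact tsLt_asymm h1 h2


end Fisheye
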